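/- Let w ∈ C²([0,∞)) with w(0)=0, w'(t) → 0 as t → ∞, w, w' ≥ 0, and ∫_0^∞ |w'(t) − ((α+4)/2)w''(t)|² dt ≤ 1 for α > 0. Then 0 ≤ w'(0) ≤ √(2/(α+4)) and w'(t) ≤ √(2/(α+4)) · (1 + 2√(t/(α+4))) for all t ≥ 0. -/

import Mathlib

open MeasureTheory Filter Set
open scoped ENNReal

set_option maxHeartbeats 1000000 in
theorem gradient_bounds_symmetry_breaking (w : ℝ → ℝ) (α : ℝ) (hα : 0 < α)
    (hw : ContDiffOn ℝ 2 w (Set.Ici 0))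
    (hw0 : w 0 = 0)
    (hw' : Tendsto (deriv w) atTop (nhds 0))
    (hwpos : ∀ t ≥ (0:ℝ), 0 ≤ w t)
    (hw'pos : ∀ t ≥ (0:ℝ), 0 ≤ deriv w t)
    (hI : (∫⁻ t in Set.Ioi (0:ℝ),
        ENNReal.ofReal ((deriv w t - (α + 4) / 2 * deriv (deriv w) t) ^ 2)) ≤ 1) :
    0 ≤ deriv w 0 ∧ deriv w 0 ≤ Real.sqrt (2 / (α + 4)) ∧
    ∀ t ≥ (0:ℝ),
      deriv w t ≤ Real.sqrt (2 / (α + 4)) * (1 + 2 * Real.sqrt (t / (α + 4))) := by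
  have hc0 : (0:ℝ) < (α + 4) / 2 := by linarith
  set c : ℝ := (α + 4) / 2 with hc
  set D : ℝ → ℝ := deriv w with hD
  set D2 : ℝ → ℝ := deriv (deriv w) with hD2
  -- Smoothness facts on `Ioi 0`
  have hwI : ContDiffOn ℝ 2 w (Ioi 0) := hw.mono Ioi_subset_Ici_self
  have hD1 : ContDiffOn ℝ 1 D (Ioi 0) := by
    have : ((1:WithTop ℕ∞) + 1) ≤ 2 := by norm_num
    exact hwI.deriv_of_isOpen isOpen_Ioi this
  have hDcont : ContinuousOn D (Ioi 0) := hD1.continuousOn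
  have hD2cont : ContinuousOn D2 (Ioi 0) :=
    hD1.continuousOn_deriv_of_isOpen isOpen_Ioi le_rfl
  have hDdiff : ∀ x ∈ Ioi (0:ℝ), HasDerivAt D (D2 x) x := by
    intro x hx
    have h1 : DifferentiableOn ℝ D (Ioi 0) := hD1.differentiableOn one_ne_zero
    exact ((h1 x hx).differentiableAt (isOpen_Ioi.mem_nhds hx)).hasDerivAt
  -- measurability
  have hgmeas : Measurable fun t => (D t - c * D2 t) ^ 2 := by
    have h1 : Measurable D := measurable_deriv w
    have h2 : Measurable D2 := measurable_deriv (deriv w)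
    exact (h1.sub (h2.const_mul c)).pow_const 2
  have hsub : ∀ {s T : ℝ}, 0 < s → Icc s T ⊆ Ioi (0:ℝ) :=
    fun {s T} hs x hx => lt_of_lt_of_le hs hx.1
  -- interval integrability of the relevant functions
  have hintD2 : ∀ {s T : ℝ}, 0 < s → s ≤ T →
      IntervalIntegrable (fun x => D2 x) volume s T := by
    intro s T hs hsT
    apply ContinuousOn.intervalIntegrable
    rw [uIcc_of_le hsT]
    exact hD2cont.mono (hsub hs)
  have hintD2sq : ∀ {s T : ℝ}, 0 < s → s ≤ T →
      IntervalIntegrable (fun x => D2 x ^ 2) volume s T := by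
    intro s T hs hsT
    apply ContinuousOn.intervalIntegrable
    rw [uIcc_of_le hsT]
    exact ((hD2cont.mono (hsub hs)).pow 2)
  have hintDD2 : ∀ {s T : ℝ}, 0 < s → s ≤ T →
      IntervalIntegrable (fun x => D x * D2 x) volume s T := by
    intro s T hs hsT
    apply ContinuousOn.intervalIntegrable
    rw [uIcc_of_le hsT]
    exact (hDcont.mono (hsub hs)).mul (hD2cont.mono (hsub hs))
  have hintg : ∀ {s T : ℝ}, 0 < s → s ≤ T →
      IntervalIntegrable (fun x => (D x - c * D2 x) ^ 2) volume s T := by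
    intro s T hs hsT
    apply ContinuousOn.intervalIntegrable
    rw [uIcc_of_le hsT]
    exact (((hDcont.mono (hsub hs)).sub ((hD2cont.mono (hsub hs)).const_smul c)).pow 2)
  -- the basic integral bound
  have key1 : ∀ s T : ℝ, 0 < s → s ≤ T → (∫ x in s..T, (D x - c * D2 x) ^ 2) ≤ 1 := by
    intro s T hs hsT
    rw [intervalIntegral.integral_of_le hsT]
    have hmono : (∫⁻ t in Ioc s T, ENNReal.ofReal ((D t - c * D2 t) ^ 2)) ≤ 1 :=
      le_trans (lintegral_mono_set (fun x hx => lt_trans hs hx.1)) hI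
    have heq : (∫ t in Ioc s T, (D t - c * D2 t) ^ 2)
        = (∫⁻ t in Ioc s T, ENNReal.ofReal ((D t - c * D2 t) ^ 2)).toReal := by
      rw [MeasureTheory.integral_eq_lintegral_of_nonneg_ae
        (Eventually.of_forall fun x => sq_nonneg _) hgmeas.aestronglyMeasurable]
    rw [heq]
    calc (∫⁻ t in Ioc s T, ENNReal.ofReal ((D t - c * D2 t) ^ 2)).toReal
        ≤ (1 : ℝ≥0∞).toReal := ENNReal.toReal_mono (by norm_num) hmono
      _ = 1 := by simp
  -- FTC computations
  have ftc1 : ∀ s T : ℝ, 0 < s → s ≤ T →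
      (∫ x in s..T, D x * D2 x) = D T ^ 2 / 2 - D s ^ 2 / 2 := by
    intro s T hs hsT
    apply intervalIntegral.integral_eq_sub_of_hasDerivAt
    · intro x hx
      rw [uIcc_of_le hsT] at hx
      have hx' : x ∈ Ioi (0:ℝ) := hsub hs hx
      have h := hDdiff x hx'
      have := (h.pow 2).div_const 2
      convert this using 1
      · rfl
      · rfl
      · push_cast
        ring
    · exact hintDD2 hs hsT
  have ftc2 : ∀ s T : ℝ, 0 < s → s ≤ T →
      (∫ x in s..T, D2 x) = D T - D s := by
    intro s T hs hsT
    apply intervalIntegral.integral_eq_sub_of_hasDerivAt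
    · intro x hx
      rw [uIcc_of_le hsT] at hx
      exact hDdiff x (hsub hs hx)
    · exact hintD2 hs hsT
  -- Lemma B : c * (D s ^2 - D T^2) ≤ ∫ g²
  have lemB : ∀ s T : ℝ, 0 < s → s ≤ T →
      c * (D s ^ 2 - D T ^ 2) ≤ ∫ x in s..T, (D x - c * D2 x) ^ 2 := by
    intro s T hs hsT
    have hpt : ∀ x ∈ Icc s T, (-2 * c) * (D x * D2 x) ≤ (D x - c * D2 x) ^ 2 := by
      intro x _
      nlinarith [sq_nonneg (D x), sq_nonneg (c * D2 x)]
    have := intervalIntegral.integral_mono_on hsT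
      ((hintDD2 hs hsT).const_mul (-2 * c)) (hintg hs hsT) hpt
    rw [intervalIntegral.integral_const_mul, ftc1 s T hs hsT] at this
    linarith
  -- Lemma C : c^2 * ∫ D2² ≤ 1 + c * D T ^ 2
  have lemC : ∀ s T : ℝ, 0 < s → s ≤ T →
      c ^ 2 * (∫ x in s..T, D2 x ^ 2) ≤ 1 + c * D T ^ 2 := by
    intro s T hs hsT
    have hpt : ∀ x ∈ Icc s T,
        c ^ 2 * D2 x ^ 2 + (-2 * c) * (D x * D2 x) ≤ (D x - c * D2 x) ^ 2 := by
      intro x _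
      nlinarith [sq_nonneg (D x)]
    have hint1 : IntervalIntegrable
        (fun x => c ^ 2 * D2 x ^ 2 + (-2 * c) * (D x * D2 x)) volume s T :=
      ((hintD2sq hs hsT).const_mul (c ^ 2)).add ((hintDD2 hs hsT).const_mul (-2 * c))
    have h2 := intervalIntegral.integral_mono_on hsT hint1 (hintg hs hsT) hpt
    rw [intervalIntegral.integral_add ((hintD2sq hs hsT).const_mul (c ^ 2))
      ((hintDD2 hs hsT).const_mul (-2 * c)), intervalIntegral.integral_const_mul,
      intervalIntegral.integral_const_mul, ftc1 s T hs hsT] at h2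
    have h3 := key1 s T hs hsT
    have h4 : 0 ≤ c * D s ^ 2 := by positivity
    nlinarith
  -- estimate 1 : c * D s ^ 2 ≤ 1 for s > 0
  have est1 : ∀ s : ℝ, 0 < s → c * D s ^ 2 ≤ 1 := by
    intro s hs
    have hlim : Tendsto (fun T => 1 + c * D T ^ 2) atTop (nhds 1) := by
      have h1 : Tendsto (fun T => D T ^ 2) atTop (nhds (0 ^ 2)) := hw'.pow 2
      have h2 : Tendsto (fun T => 1 + c * D T ^ 2) atTop (nhds (1 + c * 0 ^ 2)) :=
        (h1.const_mul c).const_add 1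
      simpa using h2
    apply ge_of_tendsto hlim
    filter_upwards [eventually_ge_atTop s] with T hT
    have h1 := lemB s T hs hT
    have h2 := key1 s T hs hT
    nlinarith
  -- estimate 2 : c * D T ≤ c * D s + sqrt (T - s)
  have est2 : ∀ s T : ℝ, 0 < s → s ≤ T → c * D T ≤ c * D s + Real.sqrt (T - s) := by
    intro s T hs hsT
    rcases eq_or_lt_of_le hsT with rfl | hsT'
    · simpa using Real.sqrt_nonneg (0:ℝ)
    set a : ℝ := Real.sqrt (T - s) with ha
    have ha0 : 0 < a := Real.sqrt_pos.2 (by linarith)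
    have ha2 : a ^ 2 = T - s := Real.sq_sqrt (by linarith)
    have hlim : Tendsto (fun T' => a + a * c / 2 * D T' ^ 2) atTop (nhds a) := by
      have h1 : Tendsto (fun T' => D T' ^ 2) atTop (nhds (0 ^ 2)) := hw'.pow 2
      have h2 := (h1.const_mul (a * c / 2)).const_add a
      simpa using h2
    have key : ∀ T' ≥ T, c * D T - c * D s ≤ a + a * c / 2 * D T' ^ 2 := by
      intro T' hT'
      have hsT'' : s ≤ T' := le_trans hsT hT'
      -- pointwise bound
      have hpt : ∀ x ∈ Icc s T, c * D2 x ≤ a * c ^ 2 / 2 * D2 x ^ 2 + 1 / (2 * a) := by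
        intro x _
        rw [← sub_nonneg]
        have heq : a * c ^ 2 / 2 * D2 x ^ 2 + 1 / (2 * a) - c * D2 x
            = (a * (c * D2 x) - 1) ^ 2 / (2 * a) := by
          field_simp
          ring
        rw [heq]
        positivity
      have hle := intervalIntegral.integral_mono_on hsT
        ((hintD2 hs hsT).const_mul c)
        (((hintD2sq hs hsT).const_mul (a * c ^ 2 / 2)).add
          (intervalIntegrable_const))
        hpt
      rw [intervalIntegral.integral_const_mul, ftc2 s T hs hsT] at hle
      rw [intervalIntegral.integral_add ((hintD2sq hs hsT).const_mul (a * c ^ 2 / 2))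
        intervalIntegrable_const, intervalIntegral.integral_const_mul,
        intervalIntegral.integral_const] at hle
      have hIsplit : (∫ x in s..T, D2 x ^ 2) ≤ ∫ x in s..T', D2 x ^ 2 := by
        have hadd := intervalIntegral.integral_add_adjacent_intervals
          (hintD2sq hs hsT) (hintD2sq (lt_of_lt_of_le hs hsT) hT')
        have hnn : 0 ≤ ∫ x in T..T', D2 x ^ 2 :=
          intervalIntegral.integral_nonneg hT' (fun x _ => sq_nonneg _)
        linarith
      have hC := lemC s T' hs hsT''
      have hD2nn : 0 ≤ ∫ x in s..T, D2 x ^ 2 :=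
        intervalIntegral.integral_nonneg hsT (fun x _ => sq_nonneg _)
      have hsm : (T - s) • (1 / (2 * a)) = a / 2 := by
        rw [smul_eq_mul, ← ha2]
        field_simp
      rw [hsm] at hle
      have h6 : c ^ 2 * (∫ x in s..T, D2 x ^ 2) ≤ 1 + c * D T' ^ 2 :=
        le_trans (mul_le_mul_of_nonneg_left hIsplit (by positivity : (0:ℝ) ≤ c ^ 2)) hC
      have h5 := mul_le_mul_of_nonneg_left h6 (by positivity : (0:ℝ) ≤ a / 2)
      nlinarith [h5, hle]
    have := ge_of_tendsto hlim (by
      filter_upwards [eventually_ge_atTop T] with T' hT' using key T' hT')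
    linarith
  -- The boundary value L of the derivative
  set L : ℝ := derivWithin w (Ici 0) 0 with hL
  have hLcont : ContinuousOn (derivWithin w (Ici 0)) (Ici 0) :=
    hw.continuousOn_derivWithin (uniqueDiffOn_Ici 0) (by norm_num)
  have hDL : Tendsto D (nhdsWithin 0 (Ioi 0)) (nhds L) := by
    have h1 : Tendsto (derivWithin w (Ici 0)) (nhdsWithin 0 (Ici 0)) (nhds L) :=
      hLcont 0 self_mem_Ici
    have h2 : Tendsto (derivWithin w (Ici 0)) (nhdsWithin 0 (Ioi 0)) (nhds L) :=
      h1.mono_left (nhdsWithin_mono 0 Ioi_subset_Ici_self)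
    apply h2.congr'
    filter_upwards [self_mem_nhdsWithin] with x hx
    exact derivWithin_of_mem_nhds (Ici_mem_nhds hx)
  have hL0 : 0 ≤ L := by
    apply ge_of_tendsto hDL
    filter_upwards [self_mem_nhdsWithin] with x hx
    exact hw'pos x (le_of_lt hx)
  have hLsq : c * L ^ 2 ≤ 1 := by
    have hlim : Tendsto (fun s => c * D s ^ 2) (nhdsWithin 0 (Ioi 0)) (nhds (c * L ^ 2)) :=
      (hDL.pow 2).const_mul c
    apply le_of_tendsto hlim
    filter_upwards [self_mem_nhdsWithin] with s hs
    exact est1 s hs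
  have hcL : c * L ≤ Real.sqrt c := by
    rw [← Real.sqrt_sq (by positivity : (0:ℝ) ≤ c * L)]
    apply Real.sqrt_le_sqrt
    nlinarith
  -- estimate 3 : c * D T ≤ c * L + sqrt T for T > 0
  have est3 : ∀ T : ℝ, 0 < T → c * D T ≤ Real.sqrt c + Real.sqrt T := by
    intro T hT
    have hlim : Tendsto (fun s => c * D s + Real.sqrt (T - s)) (nhdsWithin 0 (Ioi 0))
        (nhds (c * L + Real.sqrt T)) := by
      have h1 : Tendsto (fun s : ℝ => Real.sqrt (T - s)) (nhdsWithin 0 (Ioi 0))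
          (nhds (Real.sqrt T)) := by
        have hcont : Continuous fun s : ℝ => Real.sqrt (T - s) :=
          Real.continuous_sqrt.comp (continuous_const.sub continuous_id)
        have h2 : Tendsto (fun s : ℝ => Real.sqrt (T - s)) (nhdsWithin 0 (Ioi 0))
            (nhds (Real.sqrt (T - 0))) := (hcont.tendsto 0).mono_left nhdsWithin_le_nhds
        simpa using h2
      exact ((hDL.const_mul c).add h1)
    have hle : c * D T ≤ c * L + Real.sqrt T := by
      apply ge_of_tendsto hlim
      filter_upwards [Ioo_mem_nhdsGT_of_mem (by constructor <;> [exact le_rfl; exact hT])]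
        with s hs
      exact est2 s T hs.1 (le_of_lt hs.2)
    linarith
  -- final arithmetic
  have final : ∀ X t : ℝ, 0 ≤ t → c * X ≤ Real.sqrt c + Real.sqrt t →
      X ≤ Real.sqrt (2 / (α + 4)) * (1 + 2 * Real.sqrt (t / (α + 4))) := by
    intro X t ht hX
    have h24 : (2:ℝ) / (α + 4) = c⁻¹ := by
      rw [hc]; field_simp
    have hta : t / (α + 4) = t / (2 * c) := by
      rw [hc]; ring_nf
    rw [h24, hta, Real.sqrt_inv, Real.sqrt_div ht, Real.sqrt_mul (by norm_num : (0:ℝ) ≤ 2)]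
    set r := Real.sqrt c with hr
    have hr0 : 0 < r := Real.sqrt_pos.2 hc0
    have hr2 : r ^ 2 = c := Real.sq_sqrt hc0.le
    set u := Real.sqrt t with hu
    have hu0 : 0 ≤ u := Real.sqrt_nonneg t
    set s2 := Real.sqrt 2 with hs2
    have hs20 : 0 < s2 := Real.sqrt_pos.2 (by norm_num)
    have hs22 : s2 ^ 2 = 2 := Real.sq_sqrt (by norm_num)
    have hs2le : s2 ≤ 2 := by nlinarith
    have hgoal : r⁻¹ * (1 + 2 * (u / (s2 * r))) = (r * s2 + 2 * u) / (s2 * r ^ 2) := by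
      field_simp
    rw [hgoal, le_div_iff₀ (by positivity)]
    have h7 : X * r ^ 2 ≤ r + u := by rw [hr2]; linarith [hX]
    have h8 : s2 * (X * r ^ 2) ≤ s2 * (r + u) := mul_le_mul_of_nonneg_left h7 hs20.le
    have h9 : s2 * u ≤ 2 * u := mul_le_mul_of_nonneg_right hs2le hu0
    nlinarith [h8, h9]
  refine ⟨hw'pos 0 le_rfl, ?_, ?_⟩
  · -- deriv w 0 ≤ sqrt (2/(α+4))
    by_cases hdiff : DifferentiableAt ℝ w 0
    · have hLD : L = D 0 := by
        rw [hL, hD]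
        exact hdiff.hasDerivAt.hasDerivWithinAt.derivWithin (uniqueDiffOn_Ici 0 0 self_mem_Ici)
      have h := final (D 0) 0 le_rfl (by
        rw [← hLD]
        simpa using hcL)
      simpa using h
    · have : D 0 = 0 := deriv_zero_of_not_differentiableAt hdiff
      rw [this]
      positivity
  · intro t ht
    rcases eq_or_lt_of_le ht with rfl | ht'
    · by_cases hdiff : DifferentiableAt ℝ w 0
      · have hLD : L = D 0 := by
          rw [hL, hD]
          exact hdiff.hasDerivAt.hasDerivWithinAt.derivWithin (uniqueDiffOn_Ici 0 0 self_mem_Ici)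
        exact final (D 0) 0 le_rfl (by rw [← hLD]; simpa using hcL)
      · have h0 : D 0 = 0 := deriv_zero_of_not_differentiableAt hdiff
        rw [h0]
        positivity
    · exact final (D t) t ht (est3 t ht')
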